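/- In the tit-for-tat production dynamic, for every pair of players (i,j) and every time t ≥ 1, y_{i,j}(t+1)/y_{i,j}(t-1) = (v_i · v_j) · x_i(t-1)/x_i(t+1). -/

import Mathlib

open Filter Finset

theorem stmt_1
(n : ℕ) (x : ℕ → Fin n → ℝ) (y : ℕ → Fin n → Fin n → ℝ) (v : Fin n → ℝ)
    (hv : ∀ j, 0 < v j)
    (hx : ∀ t i, 0 < x t i)
    (hy : ∀ t i j, 0 < y t i j)
    (hsum : ∀ t i, ∑ j, y t i j = 1)
    (hprod : ∀ t i, x (t + 1) i = ∑ j, v j * (y t j i * x t j))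
    (hupd : ∀ t i j, y (t + 1) i j = v j * (y t j i * x t j) / x (t + 1) i)
    (i j : Fin n) (t : ℕ) (ht : 1 ≤ t) :
    y (t + 1) i j / y (t - 1) i j = (v i * v j) * (x (t - 1) i / x (t + 1) i) := by
  obtain ⟨s, rfl⟩ := Nat.exists_eq_add_of_le ht
  simp only [Nat.add_sub_cancel_left, Nat.add_sub_cancel, Nat.add_comm 1 s] at *
  have h1 := hupd (s + 1) i j
  have h2 := hupd s j i
  rw [h2] at h1
  rw [h1]
  have := (hx (s + 1 + 1) i).ne'
  have := (hx (s + 1) j).ne'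
  have := (hy s i j).ne'
  field_simp
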